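/- arXiv:1606.05384 — 4 statements merged into one kernel-verified Lean document; each statement's English description precedes it below -/
import Mathlib

section
/- If L is a subset of the ground set E of a matroid M such that E \ L is disconnected in the dual matroid M* (i.e., there exist disjoint nonempty A, B with E \ L = A ∪ B and r*(E \ L) = r*(A) + r*(B)), then r(E) + r(L) = r(E \ A) + r(E \ B). -/
open Matroid Set

/-- The rank of a set `X` in a matroid `M`: the largest cardinality of an
independent subset of `X`. -/
noncomputable def mrank {α : Type*} (M : Matroid α) (X : Set α) : ℕ :=
  sSup {n | ∃ I, M.Indep I ∧ I ⊆ X ∧ I.ncard = n}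

/-- A matroid is 2-connected (nonseparable) if its ground set cannot be
partitioned into two nonempty sets whose ranks sum to the rank of the whole. -/
def TwoConnected {α : Type*} (M : Matroid α) : Prop :=
  ¬ ∃ A B : Set α, A.Nonempty ∧ B.Nonempty ∧ Disjoint A B ∧ A ∪ B = M.E ∧
      mrank M A + mrank M B = mrank M M.E

/-- A subset `L` of the ground set is locked in `M` if `M|L` is 2-connected,
`M✶|(E \ L)` is 2-connected, and `min (r L) (r✶ (E \ L)) ≥ 2`. -/
def Locked {α : Type*} (M : Matroid α) (L : Set α) : Prop :=
  L ⊆ M.E ∧ TwoConnected (M ↾ L) ∧ TwoConnected (M✶ ↾ (M.E \ L)) ∧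
    2 ≤ mrank M L ∧ 2 ≤ mrank M✶ (M.E \ L)

lemma mrank_eq_of {α : Type*} {M : Matroid α} {X : Set α} {n : ℕ}
    (h : n ∈ {n | ∃ I, M.Indep I ∧ I ⊆ X ∧ I.ncard = n})
    (hub : ∀ m ∈ {n | ∃ I, M.Indep I ∧ I ⊆ X ∧ I.ncard = n}, m ≤ n) :
    mrank M X = n :=
  le_antisymm (csSup_le ⟨n, h⟩ hub) (le_csSup ⟨n, hub⟩ h)

lemma mrank_eq_ncard_of_basis' {α : Type*} {M : Matroid α} (hfin : M.E.Finite)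
    {I X : Set α} (hI : M.IsBasis' I X) : mrank M X = I.ncard := by
  apply mrank_eq_of ⟨I, hI.indep, hI.subset, rfl⟩
  rintro m ⟨J, hJ, hJX, rfl⟩
  obtain ⟨J', hJ', hJJ'⟩ := hJ.subset_isBasis'_of_subset hJX
  have hJ'fin : J'.Finite := hfin.subset hJ'.indep.subset_ground
  have h1 : J.ncard ≤ J'.ncard := ncard_le_ncard hJJ' hJ'fin
  have h2 : J'.ncard = I.ncard := by
    rw [ncard_def, ncard_def, hJ'.encard_eq_encard hI]
  omega

/-- The dual rank formula. -/
lemma mrank_dual_add {α : Type*} {M : Matroid α} (hfin : M.E.Finite)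
    {X : Set α} (hX : X ⊆ M.E) :
    mrank M✶ X + mrank M M.E = X.ncard + mrank M (M.E \ X) := by
  obtain ⟨I, hI⟩ := M.exists_isBasis' (M.E \ X)
  obtain ⟨B, hB, hIB⟩ := hI.indep.exists_isBase_superset
  have hBE : B ⊆ M.E := hB.subset_ground
  have hBfin : B.Finite := hfin.subset hBE
  have hXfin : X.Finite := hfin.subset hX
  have hIeq : B ∩ (M.E \ X) = I :=
    (hI.eq_of_subset_indep (hB.indep.subset inter_subset_left)
      (subset_inter hIB hI.subset) inter_subset_right).symm
  have hBdiff : B \ X = I := by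
    rw [← hIeq]; ext x; simp only [mem_diff, mem_inter_iff]; tauto
  have hrE : mrank M M.E = B.ncard := mrank_eq_ncard_of_basis' hfin hB.isBasis_ground.isBasis'
  have hrI : mrank M (M.E \ X) = I.ncard := mrank_eq_ncard_of_basis' hfin hI
  have hrD : mrank M✶ X = (X \ B).ncard := by
    apply mrank_eq_of
    · refine ⟨X \ B, ?_, diff_subset, rfl⟩
      rw [← coindep_def, coindep_iff_exists']
      exact ⟨⟨B, hB, subset_diff.2 ⟨hBE, disjoint_sdiff_right⟩⟩, diff_subset.trans hX⟩
    · rintro m ⟨J, hJ, hJX, rfl⟩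
      rw [← coindep_def] at hJ
      obtain ⟨B', hB', hB'J⟩ := coindep_iff_exists'.1 hJ |>.1
      have hB'E : B' ⊆ M.E := hB'.subset_ground
      have hB'fin : B'.Finite := hfin.subset hB'E
      have hJB' : Disjoint J B' := (subset_diff.1 hB'J).2.symm
      have hJsub : J ⊆ X \ B' := subset_diff.2 ⟨hJX, hJB'⟩
      have h1 : J.ncard ≤ (X \ B').ncard := ncard_le_ncard hJsub (hXfin.diff (t := B'))
      -- |X ∩ B'| + |X \ B'| = |X|
      have h2 := ncard_inter_add_ncard_diff_eq_ncard X B' hXfin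
      have h3 := ncard_inter_add_ncard_diff_eq_ncard B' X hB'fin
      -- B' \ X ⊆ M.E \ X independent, so ncard ≤ I.ncard
      have h4 : (B' \ X).ncard ≤ I.ncard := by
        have hsub : B' \ X ⊆ M.E \ X := diff_subset_diff_left hB'E
        obtain ⟨J', hJ'b, hJJ'⟩ := (hB'.indep.subset diff_subset).subset_isBasis'_of_subset hsub
        have := ncard_le_ncard hJJ' (hfin.subset hJ'b.indep.subset_ground)
        have heq : J'.ncard = I.ncard := by
          rw [ncard_def, ncard_def, hJ'b.encard_eq_encard hI]
        omega
      have h5 : B'.ncard = B.ncard := by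
        rw [ncard_def, ncard_def, hB'.encard_eq_encard_of_isBase hB]
      -- goal: J.ncard ≤ (X \ B).ncard
      have h6 := ncard_inter_add_ncard_diff_eq_ncard X B hXfin
      have h7 := ncard_inter_add_ncard_diff_eq_ncard B X hBfin
      have h8 : (B \ X).ncard = I.ncard := by rw [hBdiff]
      have h9 : (X ∩ B').ncard = (B' ∩ X).ncard := by rw [inter_comm]
      have h10 : (X ∩ B).ncard = (B ∩ X).ncard := by rw [inter_comm]
      omega
  have h6 := ncard_inter_add_ncard_diff_eq_ncard X B hXfin
  have h7 := ncard_inter_add_ncard_diff_eq_ncard B X hBfin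
  have h8 : (B \ X).ncard = I.ncard := by rw [hBdiff]
  have h10 : (X ∩ B).ncard = (B ∩ X).ncard := by rw [inter_comm]
  omega

theorem stmt3 {α : Type*} (M : Matroid α) (hfin : M.E.Finite) (L : Set α) (hL : L ⊆ M.E)
    (A B : Set α) (hA : A.Nonempty) (hB : B.Nonempty) (hdisj : Disjoint A B)
    (hunion : A ∪ B = M.E \ L)
    (hsep : mrank M✶ (M.E \ L) = mrank M✶ A + mrank M✶ B) :
    mrank M M.E + mrank M L = mrank M (M.E \ A) + mrank M (M.E \ B) := by
  have hAE : A ⊆ M.E := (subset_union_left.trans hunion.subset).trans diff_subset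
  have hBE : B ⊆ M.E := (subset_union_right.trans hunion.subset).trans diff_subset
  have f1 := mrank_dual_add hfin (diff_subset : M.E \ L ⊆ M.E)
  rw [diff_diff_cancel_left hL] at f1
  have f2 := mrank_dual_add hfin hAE
  have f3 := mrank_dual_add hfin hBE
  have hcard : (M.E \ L).ncard = A.ncard + B.ncard := by
    rw [← hunion, ncard_union_eq hdisj (hfin.subset hAE) (hfin.subset hBE)]
  omega
end

section
/- A uniform matroid U_{r,n} with 0 ≤ r ≤ n has no locked subsets; that is, there is no subset L of the ground set such that M|L is 2-connected, M*|(E\L) is 2-connected, r(L) ≥ 2 and r*(E\L) ≥ 2. -/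
open Matroid Set

lemma mrank_nonempty {α : Type*} (M : Matroid α) (X : Set α) :
    {n | ∃ I, M.Indep I ∧ I ⊆ X ∧ I.ncard = n}.Nonempty :=
  ⟨0, ∅, M.empty_indep, empty_subset _, by simp⟩

lemma mrank_bddAbove {α : Type*} (M : Matroid α) (hfin : M.E.Finite) (X : Set α) :
    BddAbove {n | ∃ I, M.Indep I ∧ I ⊆ X ∧ I.ncard = n} := by
  refine ⟨M.E.ncard, ?_⟩
  rintro n ⟨I, hI, -, rfl⟩
  exact ncard_le_ncard hI.subset_ground hfin

lemma exists_indep_of_two_le_mrank {α : Type*} {M : Matroid α} (hfin : M.E.Finite) {X : Set α}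
    (h : 2 ≤ mrank M X) : ∃ I, M.Indep I ∧ I ⊆ X ∧ 2 ≤ I.ncard := by
  obtain ⟨I, hI, hIX, hc⟩ := Nat.sSup_mem (mrank_nonempty M X) (mrank_bddAbove M hfin X)
  exact ⟨I, hI, hIX, hc ▸ h⟩

lemma mrank_eq_ncard_of_indep {α : Type*} {M : Matroid α} {X : Set α}
    (hfin : M.E.Finite) (hX : M.Indep X) : mrank M X = X.ncard := by
  refine le_antisymm (csSup_le (mrank_nonempty M X) ?_)
    (le_csSup (mrank_bddAbove M hfin X) ⟨X, hX, Subset.rfl, rfl⟩)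
  rintro n ⟨I, -, hIX, rfl⟩
  exact ncard_le_ncard hIX (hfin.subset hX.subset_ground)

lemma not_twoConnected_of_free {α : Type*} {M : Matroid α} (hfin : M.E.Finite)
    (hInd : M.Indep M.E) (h2 : 2 ≤ M.E.ncard) : ¬ TwoConnected M := by
  intro h
  have hpos : 0 < M.E.ncard := by omega
  obtain ⟨x, hx⟩ : M.E.Nonempty := by
    exact (ncard_pos hfin).1 hpos
  have hxE : {x} ⊆ M.E := singleton_subset_iff.2 hx
  have hBne : (M.E \ {x}).Nonempty := by
    rw [← ncard_pos hfin.diff]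
    have := ncard_diff hxE
    simp only [ncard_singleton] at this
    omega
  refine h ⟨{x}, M.E \ {x}, singleton_nonempty x, hBne, disjoint_sdiff_right,
    union_diff_cancel hxE, ?_⟩
  rw [mrank_eq_ncard_of_indep hfin (hInd.subset hxE),
    mrank_eq_ncard_of_indep hfin (hInd.subset diff_subset),
    mrank_eq_ncard_of_indep hfin hInd, ncard_singleton, ncard_diff hxE,
    ncard_singleton]
  omega

theorem stmt7 {α : Type*} (M : Matroid α) (hfin : M.E.Finite) (r : ℕ)
    (hr : r ≤ M.E.ncard)
    (huniform : ∀ B, M.IsBase B ↔ B ⊆ M.E ∧ B.ncard = r) :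
    ¬ ∃ L, Locked M L := by
  rintro ⟨L, hLE, hTC, hTC', hrk, hrk'⟩
  have hfinL : L.Finite := hfin.subset hLE
  have hfinD : (M.E \ L).Finite := hfin.diff
  -- independence characterization
  have hInd : ∀ I, M.Indep I ↔ I ⊆ M.E ∧ I.ncard ≤ r := by
    intro I
    constructor
    · intro hI
      obtain ⟨B, hB, hIB⟩ := hI.exists_isBase_superset
      rw [huniform] at hB
      exact ⟨hI.subset_ground, hB.2 ▸ ncard_le_ncard hIB (hfin.subset hB.1)⟩
    · rintro ⟨hIE, hIr⟩
      obtain ⟨B, hIB, hBE, hBcard⟩ := exists_subsuperset_card_eq hIE hIr hr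
      exact (((huniform B).2 ⟨hBE, hBcard⟩).indep).subset hIB
  -- |L| ≥ 2 and |E \ L| ≥ 2
  obtain ⟨I, hI, hIL, hI2⟩ := exists_indep_of_two_le_mrank hfin hrk
  have hL2 : 2 ≤ L.ncard := le_trans hI2 (ncard_le_ncard hIL hfinL)
  obtain ⟨J, hJ, hJD, hJ2⟩ :=
    exists_indep_of_two_le_mrank (M := M✶) (by rwa [dual_ground]) hrk'
  have hD2 : 2 ≤ (M.E \ L).ncard := le_trans hJ2 (ncard_le_ncard hJD hfinD)
  -- r < |L|
  have hrL : r < L.ncard := by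
    by_contra hle
    push_neg at hle
    have hLindep : M.Indep L := (hInd L).2 ⟨hLE, hle⟩
    refine not_twoConnected_of_free (M := M ↾ L) ?_ ?_ ?_ hTC
    · rwa [restrict_ground_eq]
    · rw [restrict_ground_eq, restrict_indep_iff]
      exact ⟨hLindep, Subset.rfl⟩
    · rwa [restrict_ground_eq]
  -- some base is contained in L, so E \ L is coindependent
  obtain ⟨B, hBL, hBcard⟩ := exists_subset_card_eq (le_of_lt hrL)
  have hB : M.IsBase B := (huniform B).2 ⟨hBL.trans hLE, hBcard⟩
  have hcoind : M✶.Indep (M.E \ L) := by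
    rw [← coindep_def, coindep_iff_exists diff_subset]
    exact ⟨B, hB, by rw [diff_diff_cancel_left hLE]; exact hBL⟩
  refine not_twoConnected_of_free (M := M✶ ↾ (M.E \ L)) ?_ ?_ ?_ hTC'
  · rwa [restrict_ground_eq]
  · rw [restrict_ground_eq, restrict_indep_iff]
    exact ⟨hcoind, Subset.rfl⟩
  · rwa [restrict_ground_eq]
end

section
/- If L is a locked subset of a matroid M, then L is closed (a flat) in M and E \ L is closed in the dual matroid M*. -/
open Matroid Set

section Aux

variable {α : Type*} {M : Matroid α} {X Y I J : Set α}

lemma mrankSet_nonempty (M : Matroid α) (X : Set α) :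
    {n | ∃ I, M.Indep I ∧ I ⊆ X ∧ I.ncard = n}.Nonempty :=
  ⟨0, ∅, M.empty_indep, empty_subset _, ncard_empty _⟩

lemma mrankSet_bddAbove (hfin : M.E.Finite) (X : Set α) :
    BddAbove {n | ∃ I, M.Indep I ∧ I ⊆ X ∧ I.ncard = n} := by
  refine ⟨M.E.ncard, ?_⟩
  rintro n ⟨I, hI, -, rfl⟩
  exact ncard_le_ncard hI.subset_ground hfin

lemma le_mrank (hfin : M.E.Finite) (hI : M.Indep I) (hIX : I ⊆ X) :
    I.ncard ≤ mrank M X :=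
  le_csSup (mrankSet_bddAbove hfin X) ⟨I, hI, hIX, rfl⟩

lemma mrank_eq_of_basis' (hfin : M.E.Finite) (hI : M.IsBasis' I X) :
    mrank M X = I.ncard := by
  refine le_antisymm (csSup_le (mrankSet_nonempty M X) ?_)
    (le_mrank hfin hI.indep hI.subset)
  rintro n ⟨J, hJ, hJX, rfl⟩
  obtain ⟨K, hK, hJK⟩ := hJ.subset_isBasis'_of_subset hJX
  have hKfin : K.Finite := hfin.subset hK.indep.subset_ground
  have : K.encard = I.encard := hK.encard_eq_encard hI
  calc J.ncard ≤ K.ncard := ncard_le_ncard hJK hKfin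
    _ = I.ncard := by rw [ncard_def, this, ← ncard_def]

lemma mrank_le_ncard (hfin : M.E.Finite) (X : Set α) (hX : X ⊆ M.E) :
    mrank M X ≤ X.ncard := by
  obtain ⟨I, hI⟩ := M.exists_isBasis' X
  rw [mrank_eq_of_basis' hfin hI]
  exact ncard_le_ncard hI.subset (hfin.subset hX)

lemma mrank_mono (hfin : M.E.Finite) (hXY : X ⊆ Y) : mrank M X ≤ mrank M Y := by
  refine csSup_le_csSup (mrankSet_bddAbove hfin Y) (mrankSet_nonempty M X) ?_
  rintro n ⟨I, hI, hIX, rfl⟩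
  exact ⟨I, hI, hIX.trans hXY, rfl⟩

lemma mrank_insert_le (hfin : M.E.Finite) (x : α) (X : Set α) :
    mrank M (insert x X) ≤ mrank M X + 1 := by
  obtain ⟨I, hI⟩ := M.exists_isBasis' (insert x X)
  rw [mrank_eq_of_basis' hfin hI]
  have hIfin : I.Finite := hfin.subset hI.indep.subset_ground
  have h1 : I.ncard ≤ (I \ {x}).ncard + 1 := by
    by_cases hx : x ∈ I
    · rw [ncard_diff_singleton_add_one hx hIfin]
    · rw [diff_singleton_eq_self hx]; omega
  refine h1.trans (add_le_add_left ?_ 1)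
  refine le_mrank hfin (hI.indep.subset diff_subset) ?_
  rw [diff_subset_iff, singleton_union]
  exact hI.subset

lemma mrank_restrict_eq (hAX : X ⊆ Y) : mrank (M ↾ Y) X = mrank M X := by
  unfold mrank
  congr 1
  ext n
  constructor
  · rintro ⟨I, hI, hIX, rfl⟩
    exact ⟨I, ((M.restrict_indep_iff).1 hI).1, hIX, rfl⟩
  · rintro ⟨I, hI, hIX, rfl⟩
    exact ⟨I, (M.restrict_indep_iff).2 ⟨hI, hIX.trans hAX⟩, hIX, rfl⟩

lemma mrank_singleton_eq_one (hfin : M.E.Finite) {e : α} (he : M.Indep {e}) :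
    mrank M {e} = 1 := by
  refine le_antisymm ?_ ?_
  · simpa using mrank_le_ncard hfin {e} he.subset_ground
  · simpa using le_mrank hfin he (subset_refl _)

/-- The key lemma: if `M✶ ↾ (M.E \ L)` is 2-connected with corank at least 2, then no element
of `M.E \ L` lies in the closure of `L`. -/
lemma key_lemma (M : Matroid α) (hfin : M.E.Finite) (L : Set α) (hL : L ⊆ M.E)
    (hconn : TwoConnected (M✶ ↾ (M.E \ L))) (h2 : 2 ≤ mrank M✶ (M.E \ L))
    {e : α} (he : e ∈ M.E \ L) (hle : mrank M (insert e L) ≤ mrank M L) : False := by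
  set S := M.E \ L with hS
  have hfin' : M✶.E.Finite := by rwa [dual_ground]
  have hSE : S ⊆ M.E := diff_subset
  obtain ⟨I, hI⟩ := M.exists_isBasis' L
  have hIfin : I.Finite := hfin.subset hI.indep.subset_ground
  -- `I` is also a basis' of `insert e L`
  have hIe : M.IsBasis' I (insert e L) := by
    obtain ⟨J, hJ, hIJ⟩ := hI.indep.subset_isBasis'_of_subset
      (hI.subset.trans (subset_insert e L))
    have hJfin : J.Finite := hfin.subset hJ.indep.subset_ground
    have : J.ncard ≤ I.ncard := by
      rw [← mrank_eq_of_basis' hfin hJ, ← mrank_eq_of_basis' hfin hI]; exact hle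
    rwa [eq_of_subset_of_ncard_le hIJ this hJfin]
  have heI : e ∉ I := fun h => he.2 (hI.subset h)
  have hecl : e ∈ M.closure I \ I := by
    refine ⟨?_, heI⟩
    rw [hIe.closure_eq_closure]
    exact M.subset_closure (insert e L) (insert_subset he.1 hL) (mem_insert e L)
  have hdep : ¬ M.Indep (insert e I) := by
    have := hI.indep.insert_dep_iff.2 hecl
    exact this.1
  -- step B : {e} is independent in the dual
  have hBnotmem : ∀ B, M.IsBase B → I ⊆ B → e ∉ B := by
    intro B hB hIB heB
    exact hdep (hB.indep.subset (insert_subset heB hIB))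
  have hse : M✶.Indep {e} := by
    obtain ⟨B, hB, hIB⟩ := hI.indep.exists_isBase_superset
    rw [dual_indep_iff_exists' ]
    exact ⟨singleton_subset_iff.2 he.1, B, hB, by
      simp [disjoint_singleton_left, hBnotmem B hB hIB]⟩
  have hrk1 : mrank M✶ {e} = 1 := mrank_singleton_eq_one hfin' hse
  -- step C : rank equation in the dual
  have hrkC : mrank M✶ S = mrank M✶ (S \ {e}) + 1 := by
    refine le_antisymm ?_ ?_
    · have : S = insert e (S \ {e}) := by rw [insert_diff_singleton, insert_eq_of_mem he]
      nth_rewrite 1 [this]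
      exact mrank_insert_le hfin' e _
    · obtain ⟨K, hK⟩ := M✶.exists_isBasis' (S \ {e})
      have hKfin : K.Finite := hfin.subset hK.indep.subset_ground
      have hKS : K ⊆ S \ {e} := hK.subset
      have heK : e ∉ K := fun h => (hKS h).2 rfl
      have hind : M✶.Indep (insert e K) := by
        obtain ⟨hKE, B₀, hB₀, hdisj⟩ := (dual_indep_iff_exists').1 hK.indep
        obtain ⟨B, hB, hIB, hBsub⟩ := hI.indep.exists_isBase_subset_union_isBase hB₀
        have heB : e ∉ B := hBnotmem B hB hIB
        rw [dual_indep_iff_exists']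
        refine ⟨insert_subset he.1 (hKS.trans (diff_subset.trans hSE)), B, hB, ?_⟩
        refine Set.disjoint_left.2 ?_
        intro x hx hxB
        rcases mem_insert_iff.1 hx with rfl | hxK
        · exact heB hxB
        · rcases hBsub hxB with hxI | hxB₀
          · exact ((hKS hxK).1).2 (hI.subset hxI)
          · exact (Set.disjoint_left.1 hdisj hxK) hxB₀
      have hsub : insert e K ⊆ S := insert_subset he (hKS.trans diff_subset)
      have hle2 := le_mrank hfin' hind hsub
      rw [ncard_insert_of_notMem heK hKfin] at hle2
      rw [mrank_eq_of_basis' hfin' hK]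
      exact hle2
  -- step D : contradiction with 2-connectedness
  refine hconn ⟨{e}, S \ {e}, singleton_nonempty e, ?_, ?_, ?_, ?_⟩
  · have hS2 : 2 ≤ S.ncard := h2.trans (mrank_le_ncard hfin' S hSE)
    obtain ⟨f, hf, hfe⟩ := exists_ne_of_one_lt_ncard hS2 e
    exact ⟨f, hf, hfe⟩
  · simp
  · rw [restrict_ground_eq, singleton_union, insert_diff_singleton, insert_eq_of_mem he]
  · have e1 : mrank (M✶ ↾ S) {e} = mrank M✶ {e} :=
      mrank_restrict_eq (singleton_subset_iff.2 he)
    have e2 : mrank (M✶ ↾ S) (S \ {e}) = mrank M✶ (S \ {e}) :=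
      mrank_restrict_eq diff_subset
    have e3 : mrank (M✶ ↾ S) (M✶ ↾ S).E = mrank M✶ S := by
      rw [restrict_ground_eq]; exact mrank_restrict_eq (subset_refl S)
    rw [e1, e2, e3, hrk1, hrkC]; omega

end Aux

theorem stmt8 {α : Type*} (M : Matroid α) (hfin : M.E.Finite) (L : Set α)
    (hlock : Locked M L) :
    (∀ e ∈ M.E \ L, mrank M L < mrank M (insert e L)) ∧
      (∀ e ∈ M.E \ (M.E \ L), mrank M✶ (M.E \ L) < mrank M✶ (insert e (M.E \ L))) := by
  obtain ⟨hL, hconnL, hconnS, h2L, h2S⟩ := hlock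
  constructor
  · intro e he
    by_contra hle
    push_neg at hle
    exact key_lemma M hfin L hL hconnS h2S he hle
  · intro e he
    by_contra hle
    push_neg at hle
    have hdd : M.E \ (M.E \ L) = L := diff_diff_cancel_left hL
    have hfin' : M✶.E.Finite := by rwa [dual_ground]
    refine key_lemma M✶ hfin' (M.E \ L) ?_ ?_ ?_ ?_ hle
    · rw [dual_ground]; exact diff_subset
    · rw [dual_ground, dual_dual, hdd]; exact hconnL
    · rw [dual_ground, dual_dual, hdd]; exact h2L
    · rwa [dual_ground]
end

section
/- Every vertex of the polytope {x ∈ ℝ^E : x(e) ≥ 0 for all e, x(A) ≤ r(A) for all A ⊆ E, x(E) = r(E)} is the characteristic vector of a basis of M; equivalently this polytope equals the bases polytope P(M). -/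
open Matroid Set

section Aux

variable {α : Type*} {M : Matroid α}

lemma mrank_eq_ncard_of_basis (hfin : M.E.Finite) {J X : Set α} (hJ : M.IsBasis J X) :
    mrank M X = J.ncard := by
  have hXE : X ⊆ M.E := hJ.subset_ground
  have hXfin : X.Finite := hfin.subset hXE
  refine IsGreatest.csSup_eq ⟨⟨J, hJ.indep, hJ.subset, rfl⟩, ?_⟩
  rintro n ⟨I, hI, hIX, rfl⟩
  obtain ⟨J', hJ', hIJ'⟩ := hI.subset_isBasis_of_subset hIX hXE
  have h1 : I.ncard ≤ J'.ncard := ncard_le_ncard hIJ' (hXfin.subset hJ'.subset)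
  have h2 : J'.ncard = J.ncard := by
    rw [Set.ncard_def, Set.ncard_def, hJ'.encard_eq_encard hJ]
  omega

lemma ncard_le_mrank (hfin : M.E.Finite) {I X : Set α} (hI : M.Indep I) (hIX : I ⊆ X)
    (hXE : X ⊆ M.E) : I.ncard ≤ mrank M X := by
  obtain ⟨J, hJ, hIJ⟩ := hI.subset_isBasis_of_subset hIX hXE
  rw [mrank_eq_ncard_of_basis hfin hJ]
  exact ncard_le_ncard hIJ ((hfin.subset hXE).subset hJ.subset)

lemma finsum_mem_indicator (B : Set α) {A : Set α} (hA : A.Finite) :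
    ∑ᶠ e ∈ A, B.indicator (1 : α → ℝ) e = ((B ∩ A).ncard : ℝ) := by
  classical
  rw [finsum_mem_eq_finite_toFinset_sum _ hA]
  have h1 : ∀ e ∈ hA.toFinset, B.indicator (1 : α → ℝ) e = if e ∈ B then 1 else 0 := by
    intro e _; simp [Set.indicator_apply]
  rw [Finset.sum_congr rfl h1, Finset.sum_boole]
  congr 1
  have hBA : (B ∩ A).Finite := hA.subset inter_subset_right
  rw [Set.ncard_eq_toFinset_card _ hBA]
  congr 1
  ext e
  simp [and_comm]

lemma exists_sorted_list [DecidableEq α] (c : α → ℝ) (s : Finset α) :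
    ∃ l : List α, l.Nodup ∧ l.toFinset = s ∧ l.Chain' (fun a b => c b ≤ c a) := by
  classical
  induction s using Finset.strongInduction with
  | _ s ih =>
    rcases s.eq_empty_or_nonempty with rfl | hs
    · exact ⟨[], by simp, by simp, List.isChain_nil⟩
    · obtain ⟨b, hb, hbmax⟩ := s.exists_max_image c hs
      obtain ⟨l, hnd, hto, hch⟩ := ih (s.erase b) (Finset.erase_ssubset hb)
      refine ⟨b :: l, ?_, ?_, ?_⟩
      · refine List.nodup_cons.2 ⟨?_, hnd⟩
        intro hbl
        have : b ∈ s.erase b := hto ▸ List.mem_toFinset.2 hbl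
        simp at this
      · rw [List.toFinset_cons, hto, Finset.insert_erase hb]
      · refine List.isChain_cons.2 ⟨?_, hch⟩
        intro y hy
        apply hbmax
        have : y ∈ l.toFinset := List.mem_toFinset.2 (List.mem_of_mem_head? hy)
        exact Finset.mem_of_mem_erase (hto ▸ this)

lemma list_sum_eq_range (g : α → ℝ) (l : List α) :
    (l.map g).sum = ∑ i ∈ Finset.range l.length,
      if h : i < l.length then g (l[i]'h) else 0 := by
  induction l with
  | nil => simp
  | cons a t ih =>
    rw [List.map_cons, List.sum_cons]
    show _ = ∑ i ∈ Finset.range (t.length + 1),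
      if h : i < t.length + 1 then g ((a :: t)[i]'h) else 0
    rw [Finset.sum_range_succ']
    have h0 : (if h : 0 < t.length + 1 then g ((a :: t)[0]'h) else 0) = g a := by
      rw [dif_pos (Nat.succ_pos _)]; simp
    have hstep : ∀ i ∈ Finset.range t.length,
        (if h : i + 1 < t.length + 1 then g ((a :: t)[i + 1]'h) else 0)
          = if h : i < t.length then g (t[i]'h) else 0 := by
      intro i hi
      have hi' : i < t.length := Finset.mem_range.1 hi
      rw [dif_pos (by omega : i + 1 < t.length + 1), dif_pos hi']
      simp
    rw [Finset.sum_congr rfl hstep, h0, ← ih, add_comm]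

lemma abel_ineq (d D : ℕ → ℝ) :
    ∀ n, 0 < n → (∀ i, i + 1 < n → d (i + 1) ≤ d i) → (∀ i, i < n → D (i + 1) ≤ 0) →
      D 0 = 0 → ∑ i ∈ Finset.range n, d i * (D (i + 1) - D i) ≤ d (n - 1) * D n := by
  intro n
  induction n with
  | zero => omega
  | succ n ih =>
    intro _ hd hD hD0
    rcases Nat.eq_zero_or_pos n with rfl | hn
    · simp [hD0]
    · have h1 : ∑ i ∈ Finset.range (n + 1), d i * (D (i + 1) - D i)
          = (∑ i ∈ Finset.range n, d i * (D (i + 1) - D i)) + d n * (D (n + 1) - D n) :=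
        Finset.sum_range_succ _ _
      have h2 := ih hn (fun i hi => hd i (by omega)) (fun i hi => hD i (by omega)) hD0
      have h3 : d n ≤ d (n - 1) := by
        have := hd (n - 1) (by omega)
        rwa [Nat.sub_add_cancel hn] at this
      have h4 : D n ≤ 0 := by
        have := hD (n - 1) (by omega)
        rwa [Nat.sub_add_cancel hn] at this
      have h5 : (n + 1) - 1 = n := by omega
      rw [h1, h5]
      nlinarith [mul_nonneg (sub_nonneg.2 h3) (neg_nonneg.2 h4)]

lemma exists_base_chain [DecidableEq α] (hfin : M.E.Finite) (l : List α) (hl : (↑l.toFinset : Set α) = M.E) :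
    ∃ B, M.IsBase B ∧ ∀ i : ℕ,
      mrank M ↑((l.take i).toFinset) ≤ (B ∩ ↑((l.take i).toFinset)).ncard := by
  classical
  have hsub : ∀ i, (↑((l.take i).toFinset) : Set α) ⊆ M.E := by
    intro i e he
    rw [← hl]
    simp only [Finset.mem_coe, List.mem_toFinset] at he ⊢
    exact List.take_subset _ _ he
  have key : ∀ k, ∃ J, M.IsBasis J ↑((l.take k).toFinset) ∧
      ∀ i ≤ k, mrank M ↑((l.take i).toFinset) ≤ (J ∩ ↑((l.take i).toFinset)).ncard := by
    intro k
    induction k with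
    | zero =>
      obtain ⟨J, hJ⟩ := M.exists_isBasis ↑((l.take 0).toFinset) (hsub 0)
      refine ⟨J, hJ, ?_⟩
      intro i hi
      interval_cases i
      rw [mrank_eq_ncard_of_basis hfin hJ, Set.inter_eq_self_of_subset_left hJ.subset]
    | succ k ih =>
      obtain ⟨J, hJ, hJi⟩ := ih
      have htk : J ⊆ ↑((l.take (k + 1)).toFinset) := by
        refine hJ.subset.trans ?_
        intro e he
        simp only [Finset.mem_coe, List.mem_toFinset] at he ⊢
        have : l.take k = (l.take (k + 1)).take k := by
          rw [List.take_take, Nat.min_eq_left (by omega)]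
        rw [this] at he
        exact List.take_subset _ _ he
      obtain ⟨J', hJ', hJJ'⟩ := hJ.indep.subset_isBasis_of_subset htk (hsub (k + 1))
      refine ⟨J', hJ', ?_⟩
      intro i hi
      rcases Nat.lt_or_ge i (k + 1) with h | h
      · refine (hJi i (by omega)).trans (ncard_le_ncard (inter_subset_inter_left _ hJJ') ?_)
        exact hfin.subset (inter_subset_right.trans (hsub i))
      · have : i = k + 1 := by omega
        subst this
        rw [mrank_eq_ncard_of_basis hfin hJ', Set.inter_eq_self_of_subset_left hJ'.subset]
  obtain ⟨B, hB, hBi⟩ := key l.length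
  have hBase : M.IsBase B := by
    have h1 : (↑((l.take l.length).toFinset) : Set α) = M.E := by
      rw [List.take_length, hl]
    rw [h1] at hB
    exact isBasis_ground_iff.1 hB
  refine ⟨B, hBase, ?_⟩
  intro i
  rcases le_or_gt i l.length with h | h
  · exact hBi i h
  · have : l.take i = l.take l.length := by
      rw [List.take_length, List.take_of_length_le (le_of_lt h)]
    rw [this]
    exact hBi _ le_rfl

lemma greedy (hfin : M.E.Finite) (x c : α → ℝ)
    (hA : ∀ A ⊆ M.E, ∑ᶠ e ∈ A, x e ≤ (mrank M A : ℝ))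
    (hE : ∑ᶠ e ∈ M.E, x e = (mrank M M.E : ℝ)) :
    ∃ B, M.IsBase B ∧
      ∑ᶠ e ∈ M.E, c e * x e ≤ ∑ᶠ e ∈ M.E, c e * B.indicator (1 : α → ℝ) e := by
  classical
  obtain ⟨l, hnd, hto, hch⟩ := exists_sorted_list c hfin.toFinset
  have hlE : (↑l.toFinset : Set α) = M.E := by rw [hto, hfin.coe_toFinset]
  obtain ⟨B, hB, hBi⟩ := exists_base_chain hfin l hlE
  set n := l.length with hn
  set z : α → ℝ := B.indicator 1 with hz
  have hfs : ∀ g : α → ℝ, ∑ᶠ e ∈ M.E, g e = (l.map g).sum := by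
    intro g
    rw [← hlE, finsum_mem_coe_finset, List.sum_toFinset g hnd]
  have hAi : ∀ i : ℕ, (↑((l.take i).toFinset) : Set α) ⊆ M.E := by
    intro i e he
    rw [← hlE]
    simp only [Finset.mem_coe, List.mem_toFinset] at he ⊢
    exact List.take_subset _ _ he
  have hfsA : ∀ (g : α → ℝ) (i : ℕ),
      ∑ᶠ e ∈ (↑((l.take i).toFinset) : Set α), g e = ((l.take i).map g).sum := by
    intro g i
    rw [finsum_mem_coe_finset, List.sum_toFinset g (hnd.sublist (List.take_sublist _ _))]
  set S : (α → ℝ) → ℕ → ℝ := fun g i => ((l.take i).map g).sum with hS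
  set D : ℕ → ℝ := fun i => S x i - S z i with hD
  set d : ℕ → ℝ := fun i => if h : i < n then c (l[i]'h) else 0 with hd
  have hstep : ∀ (g : α → ℝ) (i : ℕ) (h : i < n), S g (i + 1) = S g i + g (l[i]'h) := by
    intro g i h
    simp only [hS]
    rw [List.take_succ, List.map_append, List.sum_append]
    simp [List.getElem?_eq_getElem h]
  have hD0 : D 0 = 0 := by simp [hD, hS]
  have hDn : D n = 0 := by
    have h1 : S x n = (mrank M M.E : ℝ) := by
      simp only [hS, hn, List.take_length]
      rw [← hfs, hE]
    have h2 : S z n = (mrank M M.E : ℝ) := by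
      simp only [hS, hn, List.take_length]
      rw [← hfs, hz, finsum_mem_indicator B hfin,
        Set.inter_eq_self_of_subset_left hB.subset_ground,
        mrank_eq_ncard_of_basis hfin hB.isBasis_ground]
    simp [hD, h1, h2]
  have hDneg : ∀ i, i < n → D (i + 1) ≤ 0 := by
    intro i hi
    have hsub := hAi (i + 1)
    have h1 : S x (i + 1) ≤ (mrank M ↑((l.take (i + 1)).toFinset) : ℝ) := by
      simp only [hS]
      rw [← hfsA]
      exact hA _ hsub
    have h2 : (mrank M ↑((l.take (i + 1)).toFinset) : ℝ)
        ≤ ((B ∩ ↑((l.take (i + 1)).toFinset)).ncard : ℝ) := by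
      exact_mod_cast hBi (i + 1)
    have h3 : S z (i + 1) = ((B ∩ ↑((l.take (i + 1)).toFinset)).ncard : ℝ) := by
      simp only [hS]
      rw [← hfsA, hz, finsum_mem_indicator B (hfin.subset hsub)]
    simp only [hD]
    linarith
  have hmono : ∀ i, i + 1 < n → d (i + 1) ≤ d i := by
    intro i hi
    simp only [hd]
    rw [dif_pos hi, dif_pos (by omega : i < n)]
    have := List.isChain_iff_getElem.1 hch i (by omega)
    simpa using this
  have hsum : ∑ i ∈ Finset.range n, d i * (D (i + 1) - D i)
      = (l.map (fun e => c e * x e)).sum - (l.map (fun e => c e * z e)).sum := by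
    rw [list_sum_eq_range (fun e => c e * x e) l, list_sum_eq_range (fun e => c e * z e) l,
      ← Finset.sum_sub_distrib]
    apply Finset.sum_congr rfl
    intro i hi
    have hi' : i < n := Finset.mem_range.1 hi
    rw [dif_pos hi', dif_pos hi']
    simp only [hd]
    rw [dif_pos hi']
    have hx' : D (i + 1) - D i = x (l[i]'hi') - z (l[i]'hi') := by
      simp only [hD, hstep x i hi', hstep z i hi']
      ring
    rw [hx']
    ring
  refine ⟨B, hB, ?_⟩
  rw [hfs (fun e => c e * x e), hfs (fun e => c e * z e)]
  rcases Nat.eq_zero_or_pos n with h0 | hpos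
  · have : l = [] := List.length_eq_zero_iff.1 h0
    simp [this]
  · have habel := abel_ineq d D n hpos hmono hDneg hD0
    rw [hDn, mul_zero, hsum] at habel
    linarith

end Aux

theorem stmt11 {α : Type*} (M : Matroid α) (hfin : M.E.Finite) :
    {x : α → ℝ | (∀ e ∉ M.E, x e = 0) ∧ (∀ e, 0 ≤ x e) ∧
        (∀ A ⊆ M.E, ∑ᶠ e ∈ A, x e ≤ (mrank M A : ℝ)) ∧
        ∑ᶠ e ∈ M.E, x e = (mrank M M.E : ℝ)} =
      convexHull ℝ {x : α → ℝ | ∃ B, M.IsBase B ∧ x = B.indicator 1} := by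
  classical
  set Sb : Set (α → ℝ) := {x | ∃ B, M.IsBase B ∧ x = B.indicator 1} with hSb
  apply Set.Subset.antisymm
  · rintro x ⟨hx0, hxnn, hxA, hxE⟩
    have hSfin : Sb.Finite := by
      have h1 : {B : Set α | M.IsBase B}.Finite :=
        hfin.finite_subsets.subset fun B hB => hB.subset_ground
      refine (h1.image (fun B => B.indicator (1 : α → ℝ))).subset ?_
      rintro y ⟨B, hB, rfl⟩
      exact ⟨B, hB, rfl⟩
    haveI : Fintype ↥M.E := hfin.fintype
    set ρ : (α → ℝ) →ₗ[ℝ] (↥M.E → ℝ) := LinearMap.funLeft ℝ ℝ Subtype.val with hρ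
    set ε : (↥M.E → ℝ) →ₗ[ℝ] (α → ℝ) :=
      { toFun := fun y a => if h : a ∈ M.E then y ⟨a, h⟩ else 0
        map_add' := by
          intro y z; funext a; by_cases h : a ∈ M.E <;> simp [h]
        map_smul' := by
          intro r y; funext a; by_cases h : a ∈ M.E <;> simp [h] } with hε
    have hερ : ∀ w : α → ℝ, (∀ e ∉ M.E, w e = 0) → ε (ρ w) = w := by
      intro w hw; funext a
      by_cases h : a ∈ M.E
      · simp [hε, hρ, h, LinearMap.funLeft_apply]
      · simp [hε, h, hw a h]
    suffices hsuff : ρ x ∈ convexHull ℝ (ρ '' Sb) by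
      have h2 : ε (ρ x) ∈ ε '' (convexHull ℝ (ρ '' Sb)) := ⟨_, hsuff, rfl⟩
      rw [ε.image_convexHull] at h2
      have h3 : ↑ε '' (↑ρ '' Sb) = Sb := by
        rw [← Set.image_comp]
        have h4 : ∀ w ∈ Sb, (↑ε ∘ ↑ρ) w = w := by
          rintro w ⟨B, hB, rfl⟩
          exact hερ _ fun e he =>
            Set.indicator_of_notMem (fun heB => he (hB.subset_ground heB)) _
        rw [Set.image_congr h4, Set.image_id']
      rw [h3] at h2
      rwa [hερ x hx0] at h2
    by_contra hc
    have hTfin : (↑ρ '' Sb).Finite := hSfin.image _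
    obtain ⟨f, u, hfu, huy⟩ :=
      geometric_hahn_banach_closed_point (convex_convexHull ℝ _) (hTfin.isClosed_convexHull ℝ) hc
    set c : α → ℝ := fun a => if h : a ∈ M.E then
        f (fun j => if (⟨a, h⟩ : ↥M.E) = j then (1 : ℝ) else 0) else 0 with hc'
    have hf : ∀ w : α → ℝ, f (ρ w) = ∑ᶠ e ∈ M.E, c e * w e := by
      intro w
      have h1 : f (ρ w) = ∑ i : ↥M.E, (ρ w) i * f (fun j => if i = j then 1 else 0) := by
        conv_lhs => rw [pi_eq_sum_univ (ρ w)]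
        rw [map_sum]
        refine Finset.sum_congr rfl fun i _ => ?_
        rw [map_smul]
        simp [smul_eq_mul]
      rw [h1, finsum_mem_eq_finite_toFinset_sum _ hfin,
        Finset.sum_subtype hfin.toFinset (fun a => hfin.mem_toFinset) (fun e => c e * w e)]
      refine Finset.sum_congr rfl fun i _ => ?_
      have h2 : c ↑i = f (fun j => if i = j then 1 else 0) := by
        simp only [hc']
        rw [dif_pos i.2]
      rw [h2, hρ]
      simp [LinearMap.funLeft_apply, mul_comm]
    obtain ⟨B, hB, hgreedy⟩ := greedy hfin x c hxA hxE
    have h6 : ρ (B.indicator 1) ∈ convexHull ℝ (↑ρ '' Sb) :=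
      subset_convexHull ℝ _ ⟨_, ⟨B, hB, rfl⟩, rfl⟩
    have h7 := hfu _ h6
    rw [hf x] at huy
    rw [hf (B.indicator 1)] at h7
    linarith
  · apply convexHull_min
    · rintro y ⟨B, hB, rfl⟩
      refine ⟨?_, ?_, ?_, ?_⟩
      · intro e he
        exact Set.indicator_of_notMem (fun heB => he (hB.subset_ground heB)) _
      · intro e
        exact Set.indicator_nonneg (fun _ _ => zero_le_one) e
      · intro A hAE
        rw [finsum_mem_indicator B (hfin.subset hAE)]
        exact_mod_cast ncard_le_mrank hfin (hB.indep.subset inter_subset_left)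
          inter_subset_right hAE
      · rw [finsum_mem_indicator B hfin,
          Set.inter_eq_self_of_subset_left hB.subset_ground,
          mrank_eq_ncard_of_basis hfin hB.isBasis_ground]
    · intro y1 hy1 y2 hy2 a b ha hb hab
      obtain ⟨h10, h1n, h1A, h1E⟩ := hy1
      obtain ⟨h20, h2n, h2A, h2E⟩ := hy2
      have hcomb : ∀ (A : Set α), A.Finite →
          ∑ᶠ e ∈ A, (a • y1 + b • y2) e = a * ∑ᶠ e ∈ A, y1 e + b * ∑ᶠ e ∈ A, y2 e := by
        intro A hAf
        rw [finsum_mem_eq_finite_toFinset_sum _ hAf, finsum_mem_eq_finite_toFinset_sum _ hAf,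
          finsum_mem_eq_finite_toFinset_sum _ hAf, Finset.mul_sum, Finset.mul_sum,
          ← Finset.sum_add_distrib]
        refine Finset.sum_congr rfl fun e _ => ?_
        simp [smul_eq_mul]
      refine ⟨?_, ?_, ?_, ?_⟩
      · intro e he
        simp [h10 e he, h20 e he]
      · intro e
        have := h1n e
        have := h2n e
        simp only [Pi.add_apply, Pi.smul_apply, smul_eq_mul]
        nlinarith
      · intro A hAE
        rw [hcomb A (hfin.subset hAE)]
        have k1 := h1A A hAE
        have k2 := h2A A hAE
        nlinarith
      · rw [hcomb M.E hfin, h1E, h2E, ← add_mul, hab, one_mul]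
end
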